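/- Let G be a connected finite simple graph on N ≥ 1 vertices, let E ⊆ Fin N × Fin N be an orientation of its edges (each edge appears exactly once as an ordered pair), let b ∈ ℝ², let r* ∈ (ℝ²)^N with r* not equal to the configuration having r*_i = b for all i, define d : E → ℝ² by d(i,j) = r*_i − r*_j, and let a, c > 0. Let r̄ be the unique global minimizer of Φ(r) = (a/2)·Σ_{(i,j)∈E} ‖r_i − r_j − d(i,j)‖² + (c/2)·Σ_{i=1}^N ‖r_i − b‖². Then Σ_{i=1}^N ‖r̄_i − b‖² < Σ_{i=1}^N ‖r*_i − b‖², i.e., ‖r̄ − 1_N ⊗ b‖ < ‖r* − 1_N ⊗ b‖ in the Euclidean norm on (ℝ²)^N. -/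

import Mathlib

open Finset

/-- The optimal swarm configuration is strictly closer to the target location
than the desired formation placed at the target: the formation shrinks toward
the target. -/
theorem formation_shrinks_toward_target
    (N : ℕ) (hN : 1 ≤ N) (G : SimpleGraph (Fin N)) [DecidableRel G.Adj]
    (hG : G.Connected)
    (E : Finset (Fin N × Fin N))
    (hEadj : ∀ i j : Fin N, G.Adj i j ↔ ((i, j) ∈ E ∨ (j, i) ∈ E))
    (hEonce : ∀ i j : Fin N, (i, j) ∈ E → (j, i) ∉ E)
    (hEne : ∀ i j : Fin N, (i, j) ∈ E → i ≠ j)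
    (b : EuclideanSpace ℝ (Fin 2))
    (rs : PiLp 2 (fun _ : Fin N => EuclideanSpace ℝ (Fin 2)))
    (hrs : rs ≠ WithLp.toLp 2 (fun _ => b))
    (d : Fin N × Fin N → EuclideanSpace ℝ (Fin 2))
    (hd : ∀ e ∈ E, d e = rs e.1 - rs e.2)
    (a c : ℝ) (ha : 0 < a) (hc : 0 < c)
    (Φ : PiLp 2 (fun _ : Fin N => EuclideanSpace ℝ (Fin 2)) → ℝ)
    (hΦ : ∀ r, Φ r = (a / 2) * ∑ e ∈ E, ‖r e.1 - r e.2 - d e‖^2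
      + (c / 2) * ∑ i : Fin N, ‖r i - b‖^2)
    (rbar : PiLp 2 (fun _ : Fin N => EuclideanSpace ℝ (Fin 2)))
    (hmin : ∀ r, Φ rbar ≤ Φ r) :
    ∑ i : Fin N, ‖rbar i - b‖^2 < ∑ i : Fin N, ‖rs i - b‖^2 := by

  classical
  set S : ℝ := ∑ i : Fin N, ‖rs i - b‖^2 with hSdef
  set D : ℝ := ∑ e ∈ E, ‖rs e.1 - rs e.2‖^2 with hDdef
  have hS : 0 < S := by
    obtain ⟨i, hi⟩ : ∃ i, rs i ≠ b := by
      by_contra h; push_neg at h; exact hrs (PiLp.ext h)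
    have hi' : 0 < ‖rs i - b‖^2 :=
      pow_pos (norm_pos_iff.mpr (sub_ne_zero.mpr hi)) 2
    have := Finset.single_le_sum (f := fun i => ‖rs i - b‖^2)
      (fun j _ => by positivity) (Finset.mem_univ i)
    exact lt_of_lt_of_le hi' this
  have hD : 0 ≤ D := Finset.sum_nonneg (fun e _ => by positivity)
  set ε : ℝ := c * S / (a * D + c * S) with hεdef
  have hden : 0 < a * D + c * S := by nlinarith
  have hε0 : 0 < ε := div_pos (by nlinarith) hden
  have hε1 : ε ≤ 1 := by
    rw [hεdef, div_le_one hden]; nlinarith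
  have hkey : a * ε * D < c * S := by
    rw [hεdef]
    rw [show a * (c * S / (a * D + c * S)) * D = a * D * (c * S) / (a * D + c * S) by
      ring]
    rw [div_lt_iff₀ hden]
    nlinarith [mul_pos (mul_pos hc hS) (mul_pos hc hS)]
  -- the test configuration
  set rt : PiLp 2 (fun _ : Fin N => EuclideanSpace ℝ (Fin 2)) :=
    WithLp.toLp 2 (fun i => b + (1 - ε) • (rs i - b)) with hrt
  have h1 : ∀ e ∈ E, ‖rt e.1 - rt e.2 - d e‖^2 = ε^2 * ‖rs e.1 - rs e.2‖^2 := by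
    intro e he
    have : rt e.1 - rt e.2 - d e = (-ε) • (rs e.1 - rs e.2) := by
      rw [hd e he]; show (b + (1 - ε) • (rs e.1 - b)) - (b + (1 - ε) • (rs e.2 - b))
        - (rs e.1 - rs e.2) = (-ε) • (rs e.1 - rs e.2)
      module
    rw [this, norm_smul, Real.norm_eq_abs, abs_neg, abs_of_pos hε0]
    ring
  have h2 : ∀ i : Fin N, ‖rt i - b‖^2 = (1 - ε)^2 * ‖rs i - b‖^2 := by
    intro i
    have : rt i - b = (1 - ε) • (rs i - b) := by
      show (b + (1 - ε) • (rs i - b)) - b = (1 - ε) • (rs i - b); module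
    rw [this, norm_smul, Real.norm_eq_abs, mul_pow, sq_abs]
  have hΦt : Φ rt = (a / 2) * (ε^2 * D) + (c / 2) * ((1 - ε)^2 * S) := by
    rw [hΦ rt, Finset.sum_congr rfl h1, Finset.sum_congr rfl (fun i _ => h2 i),
      ← Finset.mul_sum, ← Finset.mul_sum]
  have hlow : (c / 2) * ∑ i : Fin N, ‖rbar i - b‖^2 ≤ Φ rbar := by
    rw [hΦ rbar]
    have : 0 ≤ (a / 2) * ∑ e ∈ E, ‖rbar e.1 - rbar e.2 - d e‖^2 := by
      apply mul_nonneg (by positivity)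
      exact Finset.sum_nonneg (fun e _ => by positivity)
    linarith
  have hchain : (c / 2) * ∑ i : Fin N, ‖rbar i - b‖^2 < (c / 2) * S := by
    calc (c / 2) * ∑ i : Fin N, ‖rbar i - b‖^2 ≤ Φ rbar := hlow
      _ ≤ Φ rt := hmin rt
      _ = (a / 2) * (ε^2 * D) + (c / 2) * ((1 - ε)^2 * S) := hΦt
      _ < (c / 2) * S := by
          nlinarith [mul_lt_mul_of_pos_left hkey hε0,
            mul_nonneg (mul_pos hε0 (mul_pos hc hS)).le (sub_nonneg.mpr hε1)]
  exact (mul_lt_mul_iff_right₀ (by positivity : (0:ℝ) < c / 2)).mp hchain
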